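/- Define $\varphi_s = h_1 \cdots h_{s-1}\, dh_s\, h_s^{-1} \cdots h_1^{-1}$ on $G^p$ ($G = GL(n,\mathbb{C})$), and on $G^{p+1}$ define $\theta_i = g_i^{-1} dg_i$ (pulled back via the $i$-th projection). Let $\gamma : G^{p+1} \to G^p$, $\gamma(g_0,\dots,g_p) = (g_0g_1^{-1}, \dots, g_{p-1}g_p^{-1})$. Then for any indices $i_1, \dots, i_p$, $\gamma^*\,\mathrm{tr}(\varphi_{i_1}\varphi_{i_2}\cdots\varphi_{i_p}) = \mathrm{tr}\big((\theta_{i_1-1}-\theta_{i_1})(\theta_{i_2-1}-\theta_{i_2})\cdots(\theta_{i_p-1}-\theta_{i_p})\big)$. -/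

import Mathlib

/-- An abstract model of the de Rham algebra of (scalar-valued) differential forms:
a ring `Ω` with a degree predicate, graded commutativity, and an exterior
differential `d` which is a graded antiderivation of square zero. -/
structure DiffCalc (R : Type*) (Ω : Type*) [CommRing R] [Ring Ω] [Algebra R Ω] where
  d : Ω →ₗ[R] Ω
  deg : ℕ → Ω → Prop
  deg_add : ∀ k x y, deg k x → deg k y → deg k (x + y)
  deg_mul : ∀ k l x y, deg k x → deg l y → deg (k + l) (x * y)
  deg_one : deg 0 1
  deg_d : ∀ k x, deg k x → deg (k + 1) (d x)
  gcomm : ∀ k l x y, deg k x → deg l y → x * y = ((-1 : ℤ) ^ (k * l)) • (y * x)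
  leibniz : ∀ k x y, deg k x → d (x * y) = d x * y + ((-1 : ℤ) ^ k) • (x * d y)
  d_d : ∀ x, d (d x) = 0

section Aux
variable {Ω : Type*} [Ring Ω] [Algebra ℂ Ω] (C : DiffCalc ℂ Ω)

lemma DiffCalc.d_one' : C.d 1 = 0 := by
  have h := C.leibniz 0 1 1 C.deg_one
  simp only [one_mul, mul_one, pow_zero, one_smul] at h
  have h2 : (0:Ω) + C.d 1 = C.d 1 + C.d 1 := by rw [zero_add]; exact h
  exact (add_right_cancel h2).symm

lemma matD_mul {n : ℕ} (M N : Matrix (Fin n) (Fin n) Ω) (hM : ∀ i j, C.deg 0 (M i j)) :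
    (M * N).map C.d = M.map C.d * N + M * N.map C.d := by
  ext i j
  simp only [Matrix.map_apply, Matrix.mul_apply, Matrix.add_apply]
  rw [map_sum, ← Finset.sum_add_distrib]
  refine Finset.sum_congr rfl fun k _ => ?_
  rw [C.leibniz 0 _ _ (hM i k)]
  simp

lemma matD_one (n : ℕ) : (1 : Matrix (Fin n) (Fin n) Ω).map C.d = 0 := by
  ext i j
  by_cases h : i = j <;>
    simp [Matrix.map_apply, Matrix.one_apply, h, C.d_one']

lemma memZ_of_deg (k : ℕ) (x : Ω) (hx : C.deg k x) :
    x ∈ Subring.centralizer {y : Ω | C.deg 0 y} := by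
  rw [Subring.mem_centralizer_iff]
  intro g hg
  have h := C.gcomm 0 k g x hg hx
  simpa using h

lemma matZ_mul {n : ℕ} (Z : Subring Ω) (M N : Matrix (Fin n) (Fin n) Ω)
    (hM : ∀ i j, M i j ∈ Z) (hN : ∀ i j, N i j ∈ Z) : ∀ i j, (M * N) i j ∈ Z := by
  intro i j
  rw [Matrix.mul_apply]
  exact Subring.sum_mem _ fun k _ => Z.mul_mem (hM i k) (hN k j)

lemma matZ_prod {n : ℕ} (Z : Subring Ω) (l : List (Matrix (Fin n) (Fin n) Ω))
    (h : ∀ M ∈ l, ∀ i j, M i j ∈ Z) : ∀ i j, l.prod i j ∈ Z := by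
  induction l with
  | nil =>
    intro i j
    by_cases hij : i = j <;> simp [List.prod_nil, Matrix.one_apply, hij, Z.one_mem, Z.zero_mem]
  | cons a t ih =>
    rw [List.prod_cons]
    exact matZ_mul Z a t.prod (h a List.mem_cons_self)
      (ih fun M hM => h M (List.mem_cons_of_mem a hM))

lemma trace_comm_of {n : ℕ} (A N : Matrix (Fin n) (Fin n) Ω)
    (hA : ∀ i j, C.deg 0 (A i j))
    (hN : ∀ i j, N i j ∈ Subring.centralizer {y : Ω | C.deg 0 y}) :
    (A * N).trace = (N * A).trace := by
  simp only [Matrix.trace, Matrix.diag, Matrix.mul_apply]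
  rw [Finset.sum_comm]
  refine Finset.sum_congr rfl fun j _ => Finset.sum_congr rfl fun i _ => ?_
  exact Subring.mem_centralizer_iff.mp (hN j i) (A i j) (hA i j)

end Aux

set_option maxHeartbeats 1000000 in
/-- With `φ_s = h₁⋯h_{s-1} dh_s h_s⁻¹⋯h₁⁻¹` on `G^p` (`G = GL(n,ℂ)`, coordinates
`H 0, …, H (p-1)` playing `h₁, …, h_p`), `θ_i = g_i⁻¹ dg_i` on `G^{p+1}` and
`γ(g₀,…,g_p) = (g₀g₁⁻¹, …, g_{p-1}g_p⁻¹)`, one has, for any indices `i₁, …, i_p`,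
`γ* tr(φ_{i₁} ⋯ φ_{i_p}) = tr((θ_{i₁-1} - θ_{i₁}) ⋯ (θ_{i_p-1} - θ_{i_p}))`.
Forms on `G^p` and `G^{p+1}` are modelled by rings `Ω1`, `Ω2` with differential
calculi, the coordinates by matrices of degree-zero entries, and `γ*` by an algebra
map determined on coordinates by `γ`. -/
theorem stmt_9 {Ω1 Ω2 : Type*} [Ring Ω1] [Algebra ℂ Ω1] [Ring Ω2] [Algebra ℂ Ω2]
    (C1 : DiffCalc ℂ Ω1) (C2 : DiffCalc ℂ Ω2) (n p : ℕ)
    (H Hinv : Fin p → Matrix (Fin n) (Fin n) Ω1)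
    (Gm Gi : Fin (p + 1) → Matrix (Fin n) (Fin n) Ω2)
    (γ : Ω1 →ₐ[ℂ] Ω2)
    (hinv : ∀ s, H s * Hinv s = 1) (hinv' : ∀ s, Hinv s * H s = 1)
    (hGinv : ∀ s, Gm s * Gi s = 1) (hGinv' : ∀ s, Gi s * Gm s = 1)
    (hdegH : ∀ s i j, C1.deg 0 (H s i j)) (hdegHi : ∀ s i j, C1.deg 0 (Hinv s i j))
    (hdegG : ∀ s i j, C2.deg 0 (Gm s i j)) (hdegGi : ∀ s i j, C2.deg 0 (Gi s i j))
    (hγ : ∀ s, (H s).map ⇑γ = Gm s.castSucc * Gi s.succ)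
    (hγd : ∀ x, γ (C1.d x) = C2.d (γ x))
    (idx : Fin p → Fin p) :
    γ ((List.ofFn (fun k : Fin p =>
          ((((List.finRange p).take (idx k : ℕ)).map H).prod *
            ((H (idx k)).map ⇑C1.d) * Hinv (idx k) *
            ((((List.finRange p).take (idx k : ℕ)).map Hinv).reverse).prod))).prod.trace) =
      (List.ofFn (fun k : Fin p =>
          (Gi (idx k).castSucc * (Gm (idx k).castSucc).map ⇑C2.d) -
            (Gi (idx k).succ * (Gm (idx k).succ).map ⇑C2.d))).prod.trace := by
  classical
  -- cancellation helpers
  have cA : ∀ (s : Fin (p+1)) (X : Matrix (Fin n) (Fin n) Ω2), Gm s * (Gi s * X) = X := by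
    intro s X; rw [← mul_assoc, hGinv, one_mul]
  have cB : ∀ (s : Fin (p+1)) (X : Matrix (Fin n) (Fin n) Ω2), Gi s * (Gm s * X) = X := by
    intro s X; rw [← mul_assoc, hGinv', one_mul]
  -- γ on matrices is a ring hom
  have hmul : ∀ M N : Matrix (Fin n) (Fin n) Ω1, (M * N).map ⇑γ = M.map ⇑γ * N.map ⇑γ := by
    intro M N; exact Matrix.map_mul (f := (γ : Ω1 →+* Ω2))
  have hone : (1 : Matrix (Fin n) (Fin n) Ω1).map ⇑γ = 1 :=
    Matrix.map_one _ (map_zero γ) (map_one γ)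
  -- γ of Hinv
  have hγinv : ∀ s : Fin p, (Hinv s).map ⇑γ = Gm s.succ * Gi s.castSucc := by
    intro s
    have h1 : (H s).map ⇑γ * (Hinv s).map ⇑γ = 1 := by rw [← hmul, hinv, hone]
    have h2 : (Gm s.succ * Gi s.castSucc) * ((H s).map ⇑γ) = 1 := by
      rw [hγ]
      simp only [mul_assoc, cB]
      exact hGinv _
    rw [← one_mul ((Hinv s).map ⇑γ), ← h2, mul_assoc, h1, mul_one]
  -- telescoping products
  have htake : ∀ m (hm : m ≤ p),
      ((((List.finRange p).take m).map H).prod).map ⇑γ =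
        Gm 0 * Gi ⟨m, Nat.lt_succ_of_le hm⟩ := by
    intro m
    induction m with
    | zero =>
      intro hm
      simp only [List.take_zero, List.map_nil, List.prod_nil, hone]
      exact (hGinv ⟨0, Nat.succ_pos p⟩).symm
    | succ m ih =>
      intro hm
      have hmp : m < p := hm
      rw [List.take_succ]
      have hget : (List.finRange p)[m]? = some ⟨m, hmp⟩ := by
        rw [List.getElem?_eq_getElem (by simpa using hmp), List.getElem_finRange]
        rfl
      rw [hget]
      simp only [Option.toList_some, List.map_append, List.prod_append, List.map_cons,
        List.map_nil, List.prod_cons, List.prod_nil, mul_one]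
      rw [hmul, ih (le_of_lt hmp), hγ]
      have e1 : (⟨m, hmp⟩ : Fin p).castSucc = ⟨m, Nat.lt_succ_of_le (le_of_lt hmp)⟩ := rfl
      have e2 : (⟨m, hmp⟩ : Fin p).succ = ⟨m + 1, Nat.lt_succ_of_le hm⟩ := rfl
      rw [e1, e2]
      simp only [mul_assoc, cB]
  have htake' : ∀ m (hm : m ≤ p),
      (((((List.finRange p).take m).map Hinv).reverse).prod).map ⇑γ =
        Gm ⟨m, Nat.lt_succ_of_le hm⟩ * Gi 0 := by
    intro m
    induction m with
    | zero =>
      intro hm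
      simp only [List.take_zero, List.map_nil, List.reverse_nil, List.prod_nil, hone]
      exact (hGinv ⟨0, Nat.succ_pos p⟩).symm
    | succ m ih =>
      intro hm
      have hmp : m < p := hm
      rw [List.take_succ]
      have hget : (List.finRange p)[m]? = some ⟨m, hmp⟩ := by
        rw [List.getElem?_eq_getElem (by simpa using hmp), List.getElem_finRange]
        rfl
      rw [hget]
      simp only [Option.toList_some, List.map_append, List.reverse_append, List.map_cons,
        List.map_nil, List.reverse_cons, List.reverse_nil, List.nil_append, List.prod_cons,
        List.singleton_append, List.prod_cons]
      rw [hmul, ih (le_of_lt hmp), hγinv]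
      have e1 : (⟨m, hmp⟩ : Fin p).castSucc = ⟨m, Nat.lt_succ_of_le (le_of_lt hmp)⟩ := rfl
      have e2 : (⟨m, hmp⟩ : Fin p).succ = ⟨m + 1, Nat.lt_succ_of_le hm⟩ := rfl
      rw [e1, e2]
      simp only [mul_assoc, cB]
  -- derivative of Gi
  have hDGi : ∀ s : Fin (p+1),
      (Gi s).map C2.d = -(Gi s * ((Gm s).map C2.d * Gi s)) := by
    intro s
    have h0 : (Gm s * Gi s).map C2.d = 0 := by
      rw [hGinv]; exact matD_one C2 n
    rw [matD_mul C2 (Gm s) (Gi s) (hdegG s)] at h0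
    have h1 : Gi s * ((Gm s).map C2.d * Gi s) + Gi s * (Gm s * (Gi s).map C2.d) = 0 := by
      rw [← mul_add, h0, mul_zero]
    rw [cB] at h1
    exact eq_neg_of_add_eq_zero_right h1
  -- per-factor computation
  have hfac : ∀ s : Fin p,
      (((((List.finRange p).take (s : ℕ)).map H).prod *
          ((H s).map ⇑C1.d) * Hinv s *
          ((((List.finRange p).take (s : ℕ)).map Hinv).reverse).prod)).map ⇑γ =
        Gm 0 * ((Gi s.castSucc * (Gm s.castSucc).map ⇑C2.d) -
          (Gi s.succ * (Gm s.succ).map ⇑C2.d)) * Gi 0 := by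
    intro s
    have hd : ((H s).map ⇑C1.d).map ⇑γ = ((H s).map ⇑γ).map C2.d := by
      ext i j; simp [Matrix.map_apply, hγd]
    rw [hmul, hmul, hmul, htake s (le_of_lt s.isLt), htake' s (le_of_lt s.isLt), hγinv, hd, hγ,
      matD_mul C2 (Gm s.castSucc) (Gi s.succ) (hdegG _), hDGi]
    have e1 : (⟨(s : ℕ), Nat.lt_succ_of_le (le_of_lt s.isLt)⟩ : Fin (p+1)) = s.castSucc := rfl
    rw [e1]
    simp only [mul_add, add_mul, mul_neg, neg_mul, mul_sub, sub_mul, mul_assoc, cA, cB,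
      sub_eq_add_neg]
  -- trace and product under γ
  have htrace : ∀ M : Matrix (Fin n) (Fin n) Ω1, γ M.trace = (M.map ⇑γ).trace := by
    intro M
    simp only [Matrix.trace, Matrix.diag, map_sum, Matrix.map_apply]
  have hmapprod : ∀ (F : Fin p → Matrix (Fin n) (Fin n) Ω1),
      ((List.ofFn F).prod).map ⇑γ = (List.ofFn (fun k => (F k).map ⇑γ)).prod := by
    intro F
    have h : ∀ M : Matrix (Fin n) (Fin n) Ω1, M.map ⇑γ = (γ : Ω1 →+* Ω2).mapMatrix M :=
      fun _ => rfl
    rw [h, map_list_prod, List.map_ofFn]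
    congr 1
  rw [htrace, hmapprod]
  simp only [hfac]
  -- pull out the conjugation
  have hconj : ∀ l : List (Matrix (Fin n) (Fin n) Ω2),
      (l.map (fun X => Gm 0 * X * Gi 0)).prod = Gm 0 * l.prod * Gi 0 := by
    intro l
    induction l with
    | nil => simp only [List.map_nil, List.prod_nil, mul_one]; exact (hGinv 0).symm
    | cons a t ih =>
      simp only [List.map_cons, List.prod_cons, ih]
      simp only [mul_assoc, cB]
  set Θ : Fin p → Matrix (Fin n) (Fin n) Ω2 := fun k =>
    (Gi (idx k).castSucc * (Gm (idx k).castSucc).map ⇑C2.d) -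
      (Gi (idx k).succ * (Gm (idx k).succ).map ⇑C2.d) with hΘ
  have hofn : (List.ofFn (fun k : Fin p => Gm 0 * Θ k * Gi 0)) =
      (List.ofFn Θ).map (fun X => Gm 0 * X * Gi 0) := by
    rw [List.map_ofFn]; rfl
  rw [hofn, hconj]
  -- trace of conjugate
  set Z := Subring.centralizer {y : Ω2 | C2.deg 0 y} with hZ
  have hZG : ∀ (s : Fin (p+1)) i j, Gi s i j ∈ Z := fun s i j =>
    memZ_of_deg C2 0 _ (hdegGi s i j)
  have hZD : ∀ (s : Fin (p+1)) i j, ((Gm s).map ⇑C2.d) i j ∈ Z := fun s i j =>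
    memZ_of_deg C2 1 _ (C2.deg_d 0 _ (hdegG s i j))
  have hZΘ : ∀ (k : Fin p) i j, Θ k i j ∈ Z := by
    intro k i j
    exact Z.sub_mem (matZ_mul Z _ _ (hZG _) (hZD _) i j)
      (matZ_mul Z _ _ (hZG _) (hZD _) i j)
  have hZM : ∀ i j, ((List.ofFn Θ).prod * Gi 0) i j ∈ Z := by
    refine matZ_mul Z _ _ ?_ (hZG 0)
    refine matZ_prod Z _ ?_
    intro M hM
    rw [List.mem_ofFn] at hM
    obtain ⟨k, rfl⟩ := hM
    exact hZΘ k
  rw [mul_assoc, trace_comm_of C2 (Gm 0) _ (hdegG 0) hZM, mul_assoc, hGinv', mul_one]
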